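/- arXiv:2211.07151 — 2 statements merged into one kernel-verified Lean document; each statement's English description precedes it below -/
import Mathlib

section
/- Let a < b and let f : [a, b] → ℝ be continuous and strictly increasing. For each n ≥ 1, with x_l^{(n)} = a + l(b−a)/n, y_l^{(n)} = f(x_l^{(n)}), Δy_l^{(n)} = y_l^{(n)} − y_{l−1}^{(n)} for l = 1, …, n and Δy_0^{(n)} = y_1^{(n)} − y_0^{(n)}, hat functions A_l^{(n)}, and base functions φ_l^{(n)}(x) = A_l^{(n)}(x)·Δy_l^{(n)} / Σ_{j=0}^{n} A_j^{(n)}(x)·Δy_j^{(n)}, the interpolation functions f_n(x) = Σ_{l=0}^{n} φ_l^{(n)}(x)·y_l^{(n)} converge uniformly to f on [a, b]: for every ε > 0 there exists N such that for all n > N and all x ∈ [a, b], |f_n(x) − f(x)| < ε. -/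
/-- The equidistant node `x_l^{(n)} = a + l (b-a)/n` of `[a, b]`. -/
noncomputable def nodes (a b : ℝ) (n l : ℕ) : ℝ := a + (l : ℝ) * (b - a) / (n : ℝ)

/-- The triangular hat function `A_l^{(n)}(x) = max (0, 1 - (n/(b-a)) |x - x_l^{(n)}|)`. -/
noncomputable def hatA (a b : ℝ) (n l : ℕ) (x : ℝ) : ℝ :=
  max 0 (1 - ((n : ℝ) / (b - a)) * |x - nodes a b n l|)

/-- The increment `Δy_l^{(n)} = y_l^{(n)} − y_{l−1}^{(n)}` (`l ≥ 1`), with the convention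
`Δy_0^{(n)} = Δy_1^{(n)} = y_1^{(n)} − y_0^{(n)}`, where `y_l^{(n)} = f (x_l^{(n)})`. -/
noncomputable def dy (a b : ℝ) (f : ℝ → ℝ) (n l : ℕ) : ℝ :=
  if l = 0 then f (nodes a b n 1) - f (nodes a b n 0)
  else f (nodes a b n l) - f (nodes a b n (l - 1))

/-- The base function `φ_l^{(n)}(x) = A_l^{(n)}(x) Δy_l^{(n)} / Σ_j A_j^{(n)}(x) Δy_j^{(n)}`. -/
noncomputable def phi (a b : ℝ) (f : ℝ → ℝ) (n l : ℕ) (x : ℝ) : ℝ :=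
  hatA a b n l x * dy a b f n l /
    ∑ j ∈ Finset.range (n + 1), hatA a b n j x * dy a b f n j

/-- The interpolation function `f_n(x) = Σ_l φ_l^{(n)}(x) y_l^{(n)}`. -/
noncomputable def interp (a b : ℝ) (f : ℝ → ℝ) (n : ℕ) (x : ℝ) : ℝ :=
  ∑ l ∈ Finset.range (n + 1), phi a b f n l x * f (nodes a b n l)

lemma nodes_sub (a b : ℝ) (n l m : ℕ) :
    nodes a b n m - nodes a b n l = ((m : ℝ) - l) * (b - a) / n := by
  simp only [nodes]; ring

lemma nodes_lt (a b : ℝ) (hab : a < b) {n : ℕ} (hn : 0 < n) {l m : ℕ} (h : l < m) :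
    nodes a b n l < nodes a b n m := by
  have h1 : (0:ℝ) < (m : ℝ) - l := by
    have : (l:ℝ) < m := by exact_mod_cast h
    linarith
  have h2 : (0:ℝ) < (n:ℝ) := by exact_mod_cast hn
  have := nodes_sub a b n l m
  nlinarith [div_pos (mul_pos h1 (sub_pos.mpr hab)) h2]

lemma nodes_le (a b : ℝ) (hab : a < b) {n : ℕ} (hn : 0 < n) {l m : ℕ} (h : l ≤ m) :
    nodes a b n l ≤ nodes a b n m := by
  rcases eq_or_lt_of_le h with rfl | h
  · exact le_refl _
  · exact (nodes_lt a b hab hn h).le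

lemma nodes_mem (a b : ℝ) (hab : a < b) {n l : ℕ} (hn : 0 < n) (hl : l ≤ n) :
    nodes a b n l ∈ Set.Icc a b := by
  have h0 : nodes a b n 0 = a := by simp [nodes]
  have hb : nodes a b n n = b := by
    have h2 : (0:ℝ) < (n:ℝ) := by exact_mod_cast hn
    simp only [nodes]; rw [mul_div_cancel_left₀ _ h2.ne']; ring
  constructor
  · have := nodes_le a b hab hn (Nat.zero_le l); rw [h0] at this; exact this
  · have := nodes_le a b hab hn hl; rw [hb] at this; exact this

lemma dy_pos (a b : ℝ) (hab : a < b) (f : ℝ → ℝ)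
    (hmono : StrictMonoOn f (Set.Icc a b)) {n l : ℕ} (hn : 0 < n) (hl : l ≤ n) :
    0 < dy a b f n l := by
  rcases Nat.eq_zero_or_pos l with rfl | hl0
  · simp only [dy, if_pos rfl]
    exact sub_pos.mpr (hmono (nodes_mem a b hab hn (Nat.zero_le n))
      (nodes_mem a b hab hn hn) (nodes_lt a b hab hn Nat.zero_lt_one))
  · simp only [dy, if_neg (Nat.pos_iff_ne_zero.mp hl0)]
    exact sub_pos.mpr (hmono (nodes_mem a b hab hn (le_trans (Nat.sub_le l 1) hl))
      (nodes_mem a b hab hn hl) (nodes_lt a b hab hn (by omega)))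

lemma hatA_nonneg (a b : ℝ) (n l : ℕ) (x : ℝ) : 0 ≤ hatA a b n l x := le_max_left _ _

lemma hatA_eq_zero (a b : ℝ) (hab : a < b) {n : ℕ} (hn : 0 < n) {l : ℕ} {x : ℝ}
    (h : (b - a) / n ≤ |x - nodes a b n l|) : hatA a b n l x = 0 := by
  have hba : (0:ℝ) < b - a := sub_pos.mpr hab
  have hn' : (0:ℝ) < (n:ℝ) := by exact_mod_cast hn
  apply max_eq_left
  have h1 : (1:ℝ) ≤ ((n:ℝ) / (b - a)) * |x - nodes a b n l| := by
    calc (1:ℝ) = ((n:ℝ) / (b - a)) * ((b - a)/n) := by field_simp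
    _ ≤ _ := mul_le_mul_of_nonneg_left h (by positivity)
  linarith

set_option maxHeartbeats 1000000 in
/-- Theorem 3.1 of the paper, strictly monotone case. For continuous
strictly increasing `f` on `[a, b]`, the interpolation functions
`f_n(x) = Σ_l φ_l^{(n)}(x) y_l^{(n)}` converge uniformly to `f` on `[a, b]`. -/
theorem stmt_8 (a b : ℝ) (hab : a < b) (f : ℝ → ℝ)
    (hf : ContinuousOn f (Set.Icc a b)) (hmono : StrictMonoOn f (Set.Icc a b)) :
    ∀ ε > 0, ∃ N : ℕ, ∀ n > N, ∀ x ∈ Set.Icc a b,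
      |interp a b f n x - f x| < ε := by
  intro ε hε
  have huc : UniformContinuousOn f (Set.Icc a b) :=
    isCompact_Icc.uniformContinuousOn_of_continuous hf
  rw [Metric.uniformContinuousOn_iff] at huc
  obtain ⟨δ, hδ, hδf⟩ := huc ε hε
  refine ⟨⌈(b - a) / δ⌉₊, ?_⟩
  intro n hnN x hx
  have hn : 0 < n := lt_of_le_of_lt (Nat.zero_le _) hnN
  have hn' : (0:ℝ) < (n:ℝ) := by exact_mod_cast hn
  have hba : (0:ℝ) < b - a := sub_pos.mpr hab
  have hmesh : (b - a) / n < δ := by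
    have h1 : (b - a) / δ < n := by
      calc (b - a)/δ ≤ ⌈(b - a) / δ⌉₊ := Nat.le_ceil _
      _ < n := by exact_mod_cast hnN
    rw [div_lt_iff₀ hn']
    rw [div_lt_iff₀ hδ] at h1
    nlinarith
  -- locate x in a subinterval
  set t : ℝ := (x - a) * n / (b - a) with ht
  set l : ℕ := min (n - 1) ⌊t⌋₊ with hl
  have htnn : 0 ≤ t := by
    apply div_nonneg _ hba.le
    exact mul_nonneg (sub_nonneg.mpr hx.1) hn'.le
  have htn : t ≤ n := by
    rw [div_le_iff₀ hba]
    nlinarith [hx.2]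
  have hln : l + 1 ≤ n := by omega
  have hlt : (l : ℝ) ≤ t := by
    have h1 : (⌊t⌋₊ : ℝ) ≤ t := Nat.floor_le htnn
    have h2 : (l : ℝ) ≤ (⌊t⌋₊ : ℝ) := by exact_mod_cast Nat.min_le_right _ _
    linarith
  have htl : t ≤ (l : ℝ) + 1 := by
    rcases le_or_gt ⌊t⌋₊ (n-1) with h | h
    · have h2 : l = ⌊t⌋₊ := by omega
      rw [h2]
      exact (Nat.lt_floor_add_one t).le
    · have h2 : l = n - 1 := by omega
      have h3 : (l:ℝ) + 1 = n := by
        rw [h2]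
        have : (((n-1 : ℕ)):ℝ) = (n:ℝ) - 1 := by
          push_cast [Nat.cast_sub hn]; ring
        rw [this]; ring
      rw [h3]; exact htn
  have hxl : nodes a b n l ≤ x := by
    simp only [nodes]
    rw [ht, le_div_iff₀ hba] at hlt
    have h1 : (l:ℝ) * (b - a) / n ≤ x - a := by
      rw [div_le_iff₀ hn']; linarith
    linarith
  have hxl1 : x ≤ nodes a b n (l + 1) := by
    simp only [nodes]
    rw [ht, div_le_iff₀ hba] at htl
    have h1 : x - a ≤ ((l:ℝ) + 1) * (b - a) / n := by
      rw [le_div_iff₀ hn']; nlinarith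
    push_cast
    linarith
  have hwidth : nodes a b n (l+1) - nodes a b n l = (b - a) / n := by
    rw [nodes_sub]; push_cast; ring
  -- hat values on the subinterval
  have hinv : ((n:ℝ)/(b-a)) * ((b-a)/n) = 1 := by field_simp
  have hAl : hatA a b n l x = 1 - ((n:ℝ)/(b-a)) * (x - nodes a b n l) := by
    have habs : |x - nodes a b n l| = x - nodes a b n l := abs_of_nonneg (by linarith)
    rw [hatA, habs]
    apply max_eq_right
    have h1 : x - nodes a b n l ≤ (b-a)/n := by linarith
    have h2 : ((n:ℝ)/(b-a)) * (x - nodes a b n l) ≤ ((n:ℝ)/(b-a)) * ((b-a)/n) :=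
      mul_le_mul_of_nonneg_left h1 (by positivity)
    linarith
  have hAl1 : hatA a b n (l+1) x = 1 - ((n:ℝ)/(b-a)) * (nodes a b n (l+1) - x) := by
    have habs : |x - nodes a b n (l+1)| = nodes a b n (l+1) - x := by
      rw [abs_sub_comm]; exact abs_of_nonneg (by linarith)
    rw [hatA, habs]
    apply max_eq_right
    have h1 : nodes a b n (l+1) - x ≤ (b-a)/n := by linarith
    have h2 : ((n:ℝ)/(b-a)) * (nodes a b n (l+1) - x) ≤ ((n:ℝ)/(b-a)) * ((b-a)/n) :=
      mul_le_mul_of_nonneg_left h1 (by positivity)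
    linarith
  have hsum1 : hatA a b n l x + hatA a b n (l+1) x = 1 := by
    rw [hAl, hAl1]
    have e : ((n:ℝ)/(b-a)) * (x - nodes a b n l)
        + ((n:ℝ)/(b-a)) * (nodes a b n (l+1) - x) = 1 := by
      rw [← mul_add]
      have e2 : (x - nodes a b n l) + (nodes a b n (l+1) - x) = (b-a)/n := by linarith
      rw [e2, hinv]
    linarith
  -- other hats vanish
  have hzero : ∀ j ∈ Finset.range (n+1), j ∉ ({l, l+1} : Finset ℕ) → hatA a b n j x = 0 := by
    intro j hj hjne
    simp only [Finset.mem_insert, Finset.mem_singleton, not_or] at hjne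
    simp only [Finset.mem_range] at hj
    apply hatA_eq_zero a b hab hn
    rcases lt_or_gt_of_ne hjne.1 with h | h
    · -- j < l
      have h1 : (1:ℝ) ≤ (l:ℝ) - j := by
        have : (j:ℝ) + 1 ≤ l := by exact_mod_cast h
        linarith
      have h2 := nodes_sub a b n j l
      have h3 : (b-a)/n ≤ nodes a b n l - nodes a b n j := by
        rw [h2]
        exact (div_le_div_iff_of_pos_right hn').mpr (by nlinarith)
      have h4 : 0 ≤ x - nodes a b n j := by linarith
      rw [abs_of_nonneg h4]; linarith
    · -- j > l+1, so j ≥ l+2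
      have h1 : (1:ℝ) ≤ (j:ℝ) - (l+1) := by
        have hj2 : l + 2 ≤ j := by omega
        have : ((l:ℝ) + 2) ≤ j := by exact_mod_cast hj2
        linarith
      have h2 := nodes_sub a b n (l+1) j
      have h3 : (b-a)/n ≤ nodes a b n j - nodes a b n (l+1) := by
        rw [h2]
        push_cast at h1 ⊢
        exact (div_le_div_iff_of_pos_right hn').mpr (by nlinarith)
      have h4 : 0 ≤ nodes a b n j - x := by linarith
      rw [abs_sub_comm, abs_of_nonneg h4]; linarith
  -- reduce sums to two terms
  have hpair : ({l, l+1} : Finset ℕ) ⊆ Finset.range (n+1) := by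
    intro j hj
    simp only [Finset.mem_insert, Finset.mem_singleton] at hj
    simp only [Finset.mem_range]
    omega
  have hred : ∀ g : ℕ → ℝ, ∑ j ∈ Finset.range (n+1), hatA a b n j x * g j
      = hatA a b n l x * g l + hatA a b n (l+1) x * g (l+1) := by
    intro g
    rw [← Finset.sum_subset hpair (fun j hj hj2 => by rw [hzero j hj hj2]; ring)]
    rw [Finset.sum_pair (by omega : l ≠ l+1)]
  set p : ℝ := hatA a b n l x * dy a b f n l with hp
  set q : ℝ := hatA a b n (l+1) x * dy a b f n (l+1) with hq
  have hdyl : 0 < dy a b f n l := dy_pos a b hab f hmono hn (by omega)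
  have hdyl1 : 0 < dy a b f n (l+1) := dy_pos a b hab f hmono hn hln
  have hpnn : 0 ≤ p := mul_nonneg (hatA_nonneg a b n l x) hdyl.le
  have hqnn : 0 ≤ q := mul_nonneg (hatA_nonneg a b n (l+1) x) hdyl1.le
  have hD : 0 < p + q := by
    rcases lt_or_ge 0 (hatA a b n l x) with hA | hA
    · have : 0 < p := mul_pos hA hdyl
      linarith
    · have hA0 : hatA a b n l x = 0 := le_antisymm hA (hatA_nonneg a b n l x)
      have hA1 : hatA a b n (l+1) x = 1 := by rw [hA0] at hsum1; linarith
      have : 0 < q := by rw [hq, hA1]; linarith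
      linarith
  have hden : ∑ j ∈ Finset.range (n+1), hatA a b n j x * dy a b f n j = p + q :=
    hred (dy a b f n)
  set u : ℝ := f (nodes a b n l) with hu
  set v : ℝ := f (nodes a b n (l+1)) with hv
  have hinterp : interp a b f n x = (p * u + q * v) / (p + q) := by
    have hnum : ∑ j ∈ Finset.range (n+1),
        hatA a b n j x * (dy a b f n j * f (nodes a b n j)) = p * u + q * v := by
      rw [hred (fun j => dy a b f n j * f (nodes a b n j))]
      ring
    rw [interp]
    simp only [phi, hden, div_mul_eq_mul_div]
    rw [← Finset.sum_div, ← hnum]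
    congr 1
    apply Finset.sum_congr rfl
    intro j _
    ring
  -- f x lies between u and v
  have hxmem := hx
  have hml := nodes_mem a b hab hn (le_trans (Nat.le_succ l) hln)
  have hml1 := nodes_mem a b hab hn hln
  have hufx : u ≤ f x := hmono.monotoneOn hml hx hxl
  have hfxv : f x ≤ v := hmono.monotoneOn hx hml1 hxl1
  have huv : u ≤ v := le_trans hufx hfxv
  -- v - u < ε
  have hvu : v - u < ε := by
    have hd : dist (nodes a b n (l+1)) (nodes a b n l) < δ := by
      rw [Real.dist_eq, hwidth, abs_of_pos (div_pos hba hn')]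
      exact hmesh
    have hdist := hδf _ hml1 _ hml hd
    rw [Real.dist_eq] at hdist
    have := le_abs_self (v - u)
    rw [hu, hv] at this ⊢
    linarith
  have h1 : u ≤ (p * u + q * v) / (p + q) := by
    rw [le_div_iff₀ hD]
    nlinarith [mul_le_mul_of_nonneg_left huv hqnn]
  have h2 : (p * u + q * v) / (p + q) ≤ v := by
    rw [div_le_iff₀ hD]
    nlinarith [mul_le_mul_of_nonneg_left huv hpnn]
  rw [hinterp, abs_lt]
  constructor <;> linarith
end

section
/- Let a < b, let f : [a, b] → ℝ be continuous and strictly increasing, and fix n ≥ 1. With x_l^{(n)} = a + l(b−a)/n, y_l^{(n)} = f(x_l^{(n)}), Δy_l^{(n)} = y_l^{(n)} − y_{l−1}^{(n)} (l ≥ 1), Δy_0^{(n)} = y_1^{(n)} − y_0^{(n)}, hat functions A_l^{(n)}, φ_l^{(n)}(x) = A_l^{(n)}(x)·Δy_l^{(n)} / Σ_{j=0}^{n} A_j^{(n)}(x)·Δy_j^{(n)}, and f_n(x) = Σ_{l=0}^{n} φ_l^{(n)}(x)·y_l^{(n)}: for every i ∈ {1, …, n} and every x ∈ [x_{i−1}^{(n)},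 x_i^{(n)}], one has min_{t ∈ [x_{i−1}^{(n)}, x_i^{(n)}]} f(t) ≤ f_n(x) ≤ max_{t ∈ [x_{i−1}^{(n)}, x_i^{(n)}]} f(t), and consequently |f(x) − f_n(x)| ≤ max_{t ∈ [x_{i−1}^{(n)}, x_i^{(n)}]} f(t) − min_{t ∈ [x_{i−1}^{(n)}, x_i^{(n)}]} f(t). -/
lemma nodes_succ (a b : ℝ) (n l : ℕ) :
    nodes a b n (l + 1) = nodes a b n l + (b - a) / n := by
  simp only [nodes]
  push_cast
  ring

lemma nodes_mono (a b : ℝ) (hab : a ≤ b) (n : ℕ) {l m : ℕ} (hlm : l ≤ m) :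
    nodes a b n l ≤ nodes a b n m := by
  have h0 : (0:ℝ) ≤ (b - a) / n := by
    apply div_nonneg (by linarith)
    positivity
  simp only [nodes, div_eq_mul_inv]
  have : (l:ℝ) ≤ (m:ℝ) := by exact_mod_cast hlm
  nlinarith [mul_le_mul_of_nonneg_right this (mul_nonneg (by linarith : (0:ℝ) ≤ b - a) (by positivity : (0:ℝ) ≤ ((n:ℝ))⁻¹))]

/-- For continuous strictly increasing `f` on `[a, b]`, `n ≥ 1`, and
`1 ≤ i ≤ n`, on each subinterval `[x_{i−1}^{(n)}, x_i^{(n)}]` the interpolation function is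
squeezed between the minimum and maximum of `f` there, and consequently
`|f(x) − f_n(x)|` is bounded by the oscillation of `f` on that subinterval. -/
theorem stmt_11 (a b : ℝ) (hab : a < b) (f : ℝ → ℝ)
    (hf : ContinuousOn f (Set.Icc a b)) (hmono : StrictMonoOn f (Set.Icc a b))
    (n : ℕ) (hn : 1 ≤ n) :
    ∀ i : ℕ, 1 ≤ i → i ≤ n →
      ∀ x ∈ Set.Icc (nodes a b n (i - 1)) (nodes a b n i),
        (sInf (f '' Set.Icc (nodes a b n (i - 1)) (nodes a b n i)) ≤ interp a b f n x ∧
          interp a b f n x ≤ sSup (f '' Set.Icc (nodes a b n (i - 1)) (nodes a b n i))) ∧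
        |f x - interp a b f n x| ≤
          sSup (f '' Set.Icc (nodes a b n (i - 1)) (nodes a b n i)) -
            sInf (f '' Set.Icc (nodes a b n (i - 1)) (nodes a b n i)) := by
  intro i hi1 hin x hx
  obtain ⟨k, rfl⟩ : ∃ k, i = k + 1 := ⟨i - 1, (Nat.succ_pred_eq_of_pos hi1).symm⟩
  simp only [Nat.add_sub_cancel] at hx ⊢
  have hk1n : k + 1 ≤ n := hin
  have hn0 : (0:ℝ) < (n:ℝ) := by exact_mod_cast hn
  have hh : (0:ℝ) < (b - a) / n := div_pos (by linarith) hn0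
  set h : ℝ := (b - a) / n with hhdef
  have hinv : (n:ℝ) / (b - a) = 1 / h := by
    rw [hhdef]
    field_simp
  -- node membership
  have hmem : ∀ l : ℕ, l ≤ n → nodes a b n l ∈ Set.Icc a b := by
    intro l hl
    have hl0 : (0:ℝ) ≤ (l:ℝ) := Nat.cast_nonneg l
    have hl' : (l:ℝ) ≤ (n:ℝ) := by exact_mod_cast hl
    constructor
    · simp only [nodes]
      have : (0:ℝ) ≤ (l:ℝ) * (b - a) / n :=
        div_nonneg (mul_nonneg hl0 (by linarith)) (le_of_lt hn0)
      linarith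
    · simp only [nodes]
      have : (l:ℝ) * (b - a) / n ≤ b - a := by
        rw [div_le_iff₀ hn0]
        nlinarith
      linarith
  have hlt : ∀ l : ℕ, nodes a b n l < nodes a b n (l + 1) := by
    intro l
    rw [nodes_succ]
    linarith
  -- dy positivity
  have hdy : ∀ l : ℕ, l ≤ n → 0 < dy a b f n l := by
    intro l hl
    unfold dy
    split_ifs with h0
    · have := hmono (hmem 0 (by omega)) (hmem 1 (by omega)) (hlt 0)
      linarith
    · have h1 : 1 ≤ l := Nat.one_le_iff_ne_zero.mpr h0
      have hpred : l - 1 + 1 = l := Nat.succ_pred_eq_of_pos h1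
      have := hmono (hmem (l - 1) (by omega)) (hmem l hl)
        (by rw [← hpred]; exact hlt (l - 1))
      linarith
  have hxk : nodes a b n k ≤ x := hx.1
  have hxk1 : x ≤ nodes a b n (k + 1) := hx.2
  have hk1eq : nodes a b n (k + 1) = nodes a b n k + h := nodes_succ a b n k
  -- hatA vanishes away from k, k+1
  have hAzero : ∀ j : ℕ, j ≠ k → j ≠ k + 1 → hatA a b n j x = 0 := by
    intro j hj1 hj2
    have hd : h ≤ |x - nodes a b n j| := by
      rcases lt_or_gt_of_ne hj1 with hjk | hjk
      · -- j < k : nodes j + h = nodes (j+1) ≤ nodes k ≤ x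
        have : nodes a b n (j + 1) ≤ nodes a b n k :=
          nodes_mono a b (le_of_lt hab) n (by omega)
        rw [nodes_succ] at this
        rw [abs_of_nonneg (by linarith)]
        linarith
      · -- j > k+1 : x ≤ nodes (k+1) = nodes (k+2) - h ≤ nodes j - h
        have hj2' : k + 2 ≤ j := by omega
        have : nodes a b n (k + 2) ≤ nodes a b n j :=
          nodes_mono a b (le_of_lt hab) n hj2'
        have h2 : nodes a b n (k + 2) = nodes a b n (k + 1) + h := nodes_succ a b n (k + 1)
        rw [abs_of_nonpos (by linarith)]
        linarith
    unfold hatA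
    rw [hinv]
    apply max_eq_left
    rw [div_mul_eq_mul_div, one_mul, sub_nonpos, le_div_iff₀ hh, one_mul]
    linarith
  -- hatA values at k and k+1
  have hAk : hatA a b n k x = 1 - (x - nodes a b n k) / h := by
    unfold hatA
    rw [hinv, abs_of_nonneg (by linarith), div_mul_eq_mul_div, one_mul]
    apply max_eq_right
    have : (x - nodes a b n k) / h ≤ 1 := by
      rw [div_le_one hh]; linarith
    linarith
  have hAk1 : hatA a b n (k + 1) x = (x - nodes a b n k) / h := by
    unfold hatA
    rw [hinv, abs_of_nonpos (by linarith)]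
    have heq : 1 - 1 / h * -(x - nodes a b n (k + 1)) = (x - nodes a b n k) / h := by
      rw [hk1eq]
      field_simp
      ring
    rw [heq]
    apply max_eq_right
    apply div_nonneg <;> linarith
  -- abbreviations
  set t : ℝ := (x - nodes a b n k) / h with htdef
  have ht0 : 0 ≤ t := by apply div_nonneg <;> linarith
  have ht1 : t ≤ 1 := by rw [htdef, div_le_one hh]; linarith
  set d1 : ℝ := dy a b f n k with hd1def
  set d2 : ℝ := dy a b f n (k + 1) with hd2def
  have hd1 : 0 < d1 := hdy k (by omega)
  have hd2 : 0 < d2 := hdy (k + 1) hk1n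
  set y1 : ℝ := f (nodes a b n k) with hy1def
  set y2 : ℝ := f (nodes a b n (k + 1)) with hy2def
  have hy12 : y1 ≤ y2 :=
    le_of_lt (hmono (hmem k (by omega)) (hmem (k + 1) hk1n) (hlt k))
  clear_value t d1 d2 y1 y2
  have hsub : ({k, k + 1} : Finset ℕ) ⊆ Finset.range (n + 1) := by
    intro j hj
    simp only [Finset.mem_insert, Finset.mem_singleton] at hj
    rcases hj with rfl | rfl <;> simp [Finset.mem_range] <;> omega
  -- the denominator sum
  have hsum : ∑ j ∈ Finset.range (n + 1), hatA a b n j x * dy a b f n j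
      = (1 - t) * d1 + t * d2 := by
    rw [← Finset.sum_subset hsub (fun j _ hj' => by
      simp only [Finset.mem_insert, Finset.mem_singleton, not_or] at hj'
      rw [hAzero j hj'.1 hj'.2, zero_mul])]
    rw [Finset.sum_pair (by omega : k ≠ k + 1), hAk, hAk1, hd1def, hd2def]
  have hD : 0 < (1 - t) * d1 + t * d2 := by
    rcases le_total d1 d2 with hc | hc
    · nlinarith [mul_nonneg ht0 (sub_nonneg.mpr hc)]
    · nlinarith [mul_nonneg (sub_nonneg.mpr ht1) (sub_nonneg.mpr hc)]
  -- the interpolation sum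
  have hisum : interp a b f n x =
      ((1 - t) * d1 * y1 + t * d2 * y2) / ((1 - t) * d1 + t * d2) := by
    unfold interp
    rw [← Finset.sum_subset hsub (fun j _ hj' => by
      simp only [Finset.mem_insert, Finset.mem_singleton, not_or] at hj'
      unfold phi
      rw [hAzero j hj'.1 hj'.2, zero_mul, zero_div, zero_mul])]
    rw [Finset.sum_pair (by omega : k ≠ k + 1)]
    unfold phi
    rw [hsum, hAk, hAk1, div_mul_eq_mul_div, div_mul_eq_mul_div, ← add_div,
      hd1def, hd2def, hy1def, hy2def]
  have hlow : y1 ≤ interp a b f n x := by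
    rw [hisum, le_div_iff₀ hD]
    nlinarith [mul_nonneg (mul_nonneg ht0 hd2.le) (sub_nonneg.mpr hy12)]
  have hhigh : interp a b f n x ≤ y2 := by
    rw [hisum, div_le_iff₀ hD]
    nlinarith [mul_nonneg (mul_nonneg (sub_nonneg.mpr ht1) hd1.le) (sub_nonneg.mpr hy12)]
  -- identify the sInf and sSup
  have hIccsub : Set.Icc (nodes a b n k) (nodes a b n (k + 1)) ⊆ Set.Icc a b :=
    Set.Icc_subset_Icc (hmem k (by omega)).1 (hmem (k + 1) hk1n).2
  have hmemI : nodes a b n k ∈ Set.Icc (nodes a b n k) (nodes a b n (k + 1)) :=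
    ⟨le_refl _, le_of_lt (hlt k)⟩
  have hmemI2 : nodes a b n (k + 1) ∈ Set.Icc (nodes a b n k) (nodes a b n (k + 1)) :=
    ⟨le_of_lt (hlt k), le_refl _⟩
  have hmonoOn := hmono.monotoneOn
  have hInf : sInf (f '' Set.Icc (nodes a b n k) (nodes a b n (k + 1))) = y1 := by
    apply IsLeast.csInf_eq
    constructor
    · exact ⟨nodes a b n k, hmemI, hy1def.symm⟩
    · rintro y ⟨s, hs, rfl⟩
      rw [hy1def]
      exact hmonoOn (hIccsub hmemI) (hIccsub hs) hs.1
  have hSup : sSup (f '' Set.Icc (nodes a b n k) (nodes a b n (k + 1))) = y2 := by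
    apply IsGreatest.csSup_eq
    constructor
    · exact ⟨nodes a b n (k + 1), hmemI2, hy2def.symm⟩
    · rintro y ⟨s, hs, rfl⟩
      rw [hy2def]
      exact hmonoOn (hIccsub hs) (hIccsub hmemI2) hs.2
  have hfx1 : y1 ≤ f x := hy1def ▸ hmonoOn (hIccsub hmemI) (hIccsub hx) hx.1
  have hfx2 : f x ≤ y2 := hy2def ▸ hmonoOn (hIccsub hx) (hIccsub hmemI2) hx.2
  rw [hInf, hSup]
  refine ⟨⟨hlow, hhigh⟩, ?_⟩
  rw [abs_le]
  constructor <;> linarith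
end
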